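/- The st-core operation distributes over ⊕: for all flow graphs A and B, the st-core of A ⊕ B is isomorphic to (st-core of A) ⊕ (st-core of B). -/

import Mathlib

/-- A flow graph: a finite directed multigraph (loops and parallel edges allowed)
with a distinguished source vertex `s` and target vertex `t`.
(Connectedness is stated as a separate predicate `FlowGraph.Connected`.) -/
structure FlowGraph where
  V : Type
  E : Type
  [finV : Finite V]
  [finE : Finite E]
  src : E → V
  tgt : E → V
  s : V
  t : V

attribute [instance] FlowGraph.finV FlowGraph.finE

namespace FlowGraph

/-- Adjacency in the underlying undirected multigraph, using only edges in `ES`. -/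
def adjOn (A : FlowGraph) (ES : Set A.E) (u v : A.V) : Prop :=
  ∃ e ∈ ES, (A.src e = u ∧ A.tgt e = v) ∨ (A.src e = v ∧ A.tgt e = u)

/-- Reachability in the underlying undirected multigraph, using only edges in `ES`. -/
def reachOn (A : FlowGraph) (ES : Set A.E) : A.V → A.V → Prop :=
  Relation.ReflTransGen (A.adjOn ES)

/-- The multigraph underlying a flow graph is connected. -/
def Connected (A : FlowGraph) : Prop := ∀ u v : A.V, A.reachOn Set.univ u v

/-- Isomorphism of flow graphs: a graph isomorphism mapping source to source
and target to target.  Equality "as flow graphs" means `Iso`. -/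
def Iso (A B : FlowGraph) : Prop :=
  ∃ (φV : A.V ≃ B.V) (φE : A.E ≃ B.E),
    (∀ e, B.src (φE e) = φV (A.src e)) ∧
    (∀ e, B.tgt (φE e) = φV (A.tgt e)) ∧
    φV A.s = B.s ∧ φV A.t = B.t

/-- The relation identifying `t_A` with `s_B` in the disjoint union of vertex sets. -/
def addRel (A B : FlowGraph) : (A.V ⊕ B.V) → (A.V ⊕ B.V) → Prop :=
  fun x y => x = Sum.inl A.t ∧ y = Sum.inr B.s

/-- The sum `A ⊕ B` of flow graphs: disjoint copies of `A` and `B`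
with `t_A` identified with `s_B`; source `s_A`, target `t_B`. -/
def add (A B : FlowGraph) : FlowGraph where
  V := Quot (addRel A B)
  E := A.E ⊕ B.E
  src := fun e =>
    Quot.mk _ (Sum.elim (fun a => Sum.inl (A.src a)) (fun b => Sum.inr (B.src b)) e)
  tgt := fun e =>
    Quot.mk _ (Sum.elim (fun a => Sum.inl (A.tgt a)) (fun b => Sum.inr (B.tgt b)) e)
  s := Quot.mk _ (Sum.inl A.s)
  t := Quot.mk _ (Sum.inr B.t)

/-- The relation gluing, for every edge `e = (u,v)` of `A`, the source of the
`e`-th copy of `B` to `u` and its target to `v`. -/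
def mulRel (A B : FlowGraph) : (A.V ⊕ A.E × B.V) → (A.V ⊕ A.E × B.V) → Prop :=
  fun x y => ∃ e : A.E,
    (x = Sum.inr (e, B.s) ∧ y = Sum.inl (A.src e)) ∨
    (x = Sum.inr (e, B.t) ∧ y = Sum.inl (A.tgt e))

/-- The product `A ⊗ B` of flow graphs: every directed edge `e = (u,v)` of `A` is
replaced by a fresh copy of `B`, with `u` identified with the source of the copy
and `v` with its target; source `s_A`, target `t_A`. -/
def mul (A B : FlowGraph) : FlowGraph where
  V := Quot (mulRel A B)
  E := A.E × B.E
  src := fun p => Quot.mk _ (Sum.inr (p.1, B.src p.2))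
  tgt := fun p => Quot.mk _ (Sum.inr (p.1, B.tgt p.2))
  s := Quot.mk _ (Sum.inl A.s)
  t := Quot.mk _ (Sum.inl A.t)

/-- The trivial flow graph `F₀`: one vertex, no edges, source = target. -/
def F0 : FlowGraph where
  V := Unit
  E := Empty
  src := Empty.elim
  tgt := Empty.elim
  s := ()
  t := ()

/-- The flow graph `F₁`: a single directed edge from source to target. -/
def F1 : FlowGraph where
  V := Bool
  E := Unit
  src := fun _ => false
  tgt := fun _ => true
  s := false
  t := true

/-- The graphical natural number `n`: the directed path with `n+1` vertices and
`n` edges, source its initial vertex and target its final vertex. -/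
def pathGraph (n : ℕ) : FlowGraph where
  V := Fin (n + 1)
  E := Fin n
  src := fun e => e.castSucc
  tgt := fun e => e.succ
  s := 0
  t := Fin.last n

/-- A flow graph is infinitesimal if it is nontrivial and its source equals its target. -/
def Infinitesimal (A : FlowGraph) : Prop := ¬ A.Iso F0 ∧ A.s = A.t

/-- `w` is a splitting vertex of `A`: `w ≠ s_A, t_A`, and after deleting `w`
(i.e. using only edges not incident to `w`), `s_A` and `t_A` lie in distinct
components (hence deletion produces at least two components). -/
def IsSplittingVertex (A : FlowGraph) (w : A.V) : Prop :=
  w ≠ A.s ∧ w ≠ A.t ∧ ¬ A.reachOn {e | A.src e ≠ w ∧ A.tgt e ≠ w} A.s A.t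

/-- `e₀` is a splitting edge of `A`: deleting `e₀` leaves exactly two components,
one containing `s_A` and the other containing `t_A`. -/
def IsSplittingEdge (A : FlowGraph) (e₀ : A.E) : Prop :=
  ¬ A.reachOn {e | e ≠ e₀} A.s A.t ∧
  ∀ v : A.V, A.reachOn {e | e ≠ e₀} v A.s ∨ A.reachOn {e | e ≠ e₀} v A.t

/-- The initial vertex of a directed edge traversed with direction `dir`
(`true` = forwards, `false` = backwards). -/
def stepSrc (A : FlowGraph) (p : A.E × Bool) : A.V := if p.2 then A.src p.1 else A.tgt p.1

/-- The final vertex of a directed edge traversed with direction `dir`. -/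
def stepTgt (A : FlowGraph) (p : A.E × Bool) : A.V := if p.2 then A.tgt p.1 else A.src p.1

/-- `l` is a walk from `u` to `v` in the underlying undirected multigraph:
a list of edges each traversed in some direction, consecutively matching. -/
def IsWalk (A : FlowGraph) : A.V → A.V → List (A.E × Bool) → Prop
  | u, v, [] => u = v
  | u, v, p :: l => A.stepSrc p = u ∧ A.IsWalk (A.stepTgt p) v l

/-- The list of vertices visited by a walk starting at `u`. -/
def walkVertices (A : FlowGraph) (u : A.V) : List (A.E × Bool) → List A.V
  | [] => [u]
  | p :: l => u :: A.walkVertices (A.stepTgt p) l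

/-- The edge `e` has the ST property: some non-self-intersecting path from `s_A`
to `t_A` in the underlying undirected multigraph traverses `e`. -/
def HasST (A : FlowGraph) (e : A.E) : Prop :=
  ∃ l : List (A.E × Bool), A.IsWalk A.s A.t l ∧ (A.walkVertices A.s l).Nodup ∧
    ∃ dir : Bool, (e, dir) ∈ l

/-- `A` is an st-flow graph: every edge has the ST property. -/
def IsSTGraph (A : FlowGraph) : Prop := ∀ e : A.E, A.HasST e

/-- The vertex set of the st-core: `s_A`, `t_A`, and all endpoints of ST edges. -/
def stCoreV (A : FlowGraph) : Set A.V :=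
  {v | v = A.s ∨ v = A.t ∨ ∃ e, A.HasST e ∧ (A.src e = v ∨ A.tgt e = v)}

/-- The st-core of `A`: delete all edges without the ST property and keep the
subgraph induced by the remaining edges together with `s_A` and `t_A`. -/
def stCore (A : FlowGraph) : FlowGraph where
  V := {v // v ∈ A.stCoreV}
  E := {e // A.HasST e}
  src := fun e => ⟨A.src e.1, Or.inr (Or.inr ⟨e.1, e.2, Or.inl rfl⟩)⟩
  tgt := fun e => ⟨A.tgt e.1, Or.inr (Or.inr ⟨e.1, e.2, Or.inr rfl⟩)⟩
  s := ⟨A.s, Or.inl rfl⟩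
  t := ⟨A.t, Or.inr (Or.inl rfl)⟩

/-- An embedding of (the multigraph of) `A` into (the multigraph of) `B`:
injective on vertices and on edges, preserving directed incidence. -/
structure Emb (A B : FlowGraph) where
  vmap : A.V → B.V
  emap : A.E → B.E
  vinj : Function.Injective vmap
  einj : Function.Injective emap
  src_map : ∀ e, B.src (emap e) = vmap (A.src e)
  tgt_map : ∀ e, B.tgt (emap e) = vmap (A.tgt e)

/-- `(V₁, E₁)` is a subgraph: all endpoints of edges in `E₁` lie in `V₁`. -/
def IsSubgraph (A : FlowGraph) (VS : Set A.V) (ES : Set A.E) : Prop :=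
  ∀ e ∈ ES, A.src e ∈ VS ∧ A.tgt e ∈ VS

/-- The subgraph `(VS, ES)` is connected. -/
def SubConnected (A : FlowGraph) (VS : Set A.V) (ES : Set A.E) : Prop :=
  ∀ u ∈ VS, ∀ v ∈ VS, A.reachOn ES u v

/-- An `(s,t)`-splitting of `A`: two connected subgraphs, the first containing
`s_A`, the second containing `t_A`, whose edge sets partition the edges of `A`. -/
def IsSplitting (A : FlowGraph) (V₁ V₂ : Set A.V) (E₁ E₂ : Set A.E) : Prop :=
  A.IsSubgraph V₁ E₁ ∧ A.IsSubgraph V₂ E₂ ∧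
  A.SubConnected V₁ E₁ ∧ A.SubConnected V₂ E₂ ∧
  A.s ∈ V₁ ∧ A.t ∈ V₂ ∧
  E₁ ∪ E₂ = Set.univ ∧ E₁ ∩ E₂ = ∅

/-- The weak order `A ⩽ B`: there is an `(s,t)`-splitting `(H₁, H₂)` of `A` and
graph embeddings `φᵢ : Hᵢ → B` with `φ₁ s_A = s_B`, `φ₂ t_A = t_B`, and whose
edge images are disjoint. -/
def weakLE (A B : FlowGraph) : Prop :=
  ∃ (V₁ V₂ : Set A.V) (E₁ E₂ : Set A.E)
    (φ₁V φ₂V : A.V → B.V) (φ₁E φ₂E : A.E → B.E),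
    A.IsSplitting V₁ V₂ E₁ E₂ ∧
    Set.InjOn φ₁V V₁ ∧ Set.InjOn φ₂V V₂ ∧
    Set.InjOn φ₁E E₁ ∧ Set.InjOn φ₂E E₂ ∧
    (∀ e ∈ E₁, B.src (φ₁E e) = φ₁V (A.src e) ∧ B.tgt (φ₁E e) = φ₁V (A.tgt e)) ∧
    (∀ e ∈ E₂, B.src (φ₂E e) = φ₂V (A.src e) ∧ B.tgt (φ₂E e) = φ₂V (A.tgt e)) ∧
    φ₁V A.s = B.s ∧ φ₂V A.t = B.t ∧
    (φ₁E '' E₁) ∩ (φ₂E '' E₂) = ∅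

/-- `k`-fold sum `C ⊕ C ⊕ ⋯ ⊕ C` (`k` summands); `smul 0 C = F₀`. -/
def smul : ℕ → FlowGraph → FlowGraph
  | 0, _ => F0
  | n + 1, C => C.add (smul n C)

/-- Sum of a head flow graph with a list of further summands:
`sumList A₀ [A₁, …, Aₖ] = A₀ ⊕ A₁ ⊕ ⋯ ⊕ Aₖ`. -/
def sumList (A : FlowGraph) (L : List FlowGraph) : FlowGraph := L.foldl add A

/-- `A` is ⊕-irreducible: it is not (isomorphic to) a sum of two nontrivial flow graphs. -/
def IsIrreducible (A : FlowGraph) : Prop :=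
  ¬ ∃ B C : FlowGraph, B.Connected ∧ C.Connected ∧
      ¬ B.Iso F0 ∧ ¬ C.Iso F0 ∧ A.Iso (B.add C)

end FlowGraph

namespace FlowGraph

/-! ### Auxiliary lemmas on walks -/

lemma isWalk_nil' {A : FlowGraph} {u v : A.V} (h : A.IsWalk u v []) : u = v := h

lemma isWalk_cons' {A : FlowGraph} {u v : A.V} {p : A.E × Bool} {l : List (A.E × Bool)} :
    A.IsWalk u v (p :: l) ↔ A.stepSrc p = u ∧ A.IsWalk (A.stepTgt p) v l := Iff.rfl

lemma walkVertices_nil' {A : FlowGraph} (u : A.V) : A.walkVertices u [] = [u] := rfl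

lemma walkVertices_cons' {A : FlowGraph} (u : A.V) (p : A.E × Bool) (l : List (A.E × Bool)) :
    A.walkVertices u (p :: l) = u :: A.walkVertices (A.stepTgt p) l := rfl

lemma walkVertices_ne_nil {A : FlowGraph} (u : A.V) (l : List (A.E × Bool)) :
    A.walkVertices u l ≠ [] := by
  cases l <;> simp [walkVertices]

lemma start_mem_walkVertices {A : FlowGraph} (u : A.V) (l : List (A.E × Bool)) :
    u ∈ A.walkVertices u l := by
  cases l <;> simp [walkVertices]

lemma isWalk_append' {A : FlowGraph} {u w v : A.V} {l₁ l₂ : List (A.E × Bool)}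
    (h₁ : A.IsWalk u w l₁) (h₂ : A.IsWalk w v l₂) : A.IsWalk u v (l₁ ++ l₂) := by
  induction l₁ generalizing u with
  | nil => obtain rfl : u = w := h₁; exact h₂
  | cons p l ih => exact ⟨h₁.1, ih h₁.2⟩

lemma walkVertices_append' {A : FlowGraph} {u w : A.V} {l₁ : List (A.E × Bool)}
    (l₂ : List (A.E × Bool)) (h : A.IsWalk u w l₁) :
    A.walkVertices u (l₁ ++ l₂) = (A.walkVertices u l₁).dropLast ++ A.walkVertices w l₂ := by
  induction l₁ generalizing u with
  | nil => obtain rfl : u = w := h; simp [walkVertices]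
  | cons p l ih =>
    obtain ⟨h1, h2⟩ := h
    rw [List.cons_append, walkVertices_cons', walkVertices_cons', ih h2,
      List.dropLast_cons_of_ne_nil (walkVertices_ne_nil _ _), List.cons_append]

lemma walkVertices_eq_dropLast_append {A : FlowGraph} {u v : A.V} {l : List (A.E × Bool)}
    (h : A.IsWalk u v l) :
    A.walkVertices u l = (A.walkVertices u l).dropLast ++ [v] := by
  induction l generalizing u with
  | nil => obtain rfl : u = v := h; rfl
  | cons p l ih =>
    obtain ⟨h1, h2⟩ := h
    rw [walkVertices_cons', List.dropLast_cons_of_ne_nil (walkVertices_ne_nil _ _),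
      List.cons_append, ← ih h2]

lemma isWalk_concat_last {A : FlowGraph} {u v : A.V} {l : List (A.E × Bool)} {p : A.E × Bool}
    (h : A.IsWalk u v (l ++ [p])) : A.stepTgt p = v := by
  induction l generalizing u with
  | nil => exact h.2
  | cons q l ih => exact ih h.2

lemma walk_suffix {A : FlowGraph} {w v u : A.V} {l : List (A.E × Bool)}
    (h : A.IsWalk w v l) (hu : u ∈ A.walkVertices w l) :
    ∃ l', A.IsWalk u v l' ∧ (A.walkVertices u l') <:+ (A.walkVertices w l) := by
  induction l generalizing w with
  | nil =>
    obtain rfl : w = v := h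
    simp [walkVertices] at hu
    exact ⟨[], by subst hu; rfl, by subst hu; exact List.suffix_refl _⟩
  | cons p l ih =>
    rw [walkVertices_cons', List.mem_cons] at hu
    rcases hu with rfl | hu
    · exact ⟨p :: l, h, List.suffix_refl _⟩
    · obtain ⟨l', hw', hs'⟩ := ih h.2 hu
      exact ⟨l', hw', hs'.trans (List.suffix_cons _ _)⟩

lemma walk_shorten {A : FlowGraph} {u v : A.V} {l : List (A.E × Bool)}
    (h : A.IsWalk u v l) :
    ∃ l', A.IsWalk u v l' ∧ (A.walkVertices u l').Nodup := by
  induction l generalizing u with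
  | nil => exact ⟨[], h, by obtain rfl : u = v := h; simp [walkVertices]⟩
  | cons p l ih =>
    obtain ⟨h1, h2⟩ := h
    obtain ⟨l', hw', hnd'⟩ := ih h2
    by_cases hmem : u ∈ A.walkVertices (A.stepTgt p) l'
    · obtain ⟨l'', hw'', hs''⟩ := walk_suffix hw' hmem
      exact ⟨l'', hw'', hnd'.sublist hs''.sublist⟩
    · exact ⟨p :: l', ⟨h1, hw'⟩, by rw [walkVertices_cons']; exact List.nodup_cons.mpr ⟨hmem, hnd'⟩⟩

lemma reach_isWalk {A : FlowGraph} {u v : A.V} (h : A.reachOn Set.univ u v) :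
    ∃ l, A.IsWalk u v l := by
  induction h with
  | refl => exact ⟨[], rfl⟩
  | tail _ hadj ih =>
    obtain ⟨l, hl⟩ := ih
    obtain ⟨e, -, hcase⟩ := hadj
    rcases hcase with ⟨hs, ht⟩ | ⟨hs, ht⟩
    · exact ⟨l ++ [(e, true)], isWalk_append' hl ⟨hs, ht⟩⟩
    · exact ⟨l ++ [(e, false)], isWalk_append' hl ⟨ht, hs⟩⟩

lemma exists_simple_path {A : FlowGraph} (hA : A.Connected) :
    ∃ l, A.IsWalk A.s A.t l ∧ (A.walkVertices A.s l).Nodup := by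
  obtain ⟨l, hl⟩ := reach_isWalk (hA A.s A.t)
  exact walk_shorten hl

/-! ### The quotient in `add` -/

variable {A B : FlowGraph}

open Classical in
noncomputable def normV (A B : FlowGraph) : A.V ⊕ B.V → A.V ⊕ B.V
  | .inl u => .inl u
  | .inr v => if v = B.s then .inl A.t else .inr v

lemma normV_respects (A B : FlowGraph) :
    ∀ x y, addRel A B x y → normV A B x = normV A B y := by
  rintro x y ⟨rfl, rfl⟩; simp [normV]

lemma mk_eq_iff {x y : A.V ⊕ B.V} :
    Quot.mk (addRel A B) x = Quot.mk (addRel A B) y ↔ normV A B x = normV A B y := by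
  constructor
  · intro h
    exact congrArg (Quot.lift (normV A B) (normV_respects A B)) h
  · intro h
    rcases x with u | u <;> rcases y with v | v
    · simp only [normV] at h
      rw [h]
    · simp only [normV] at h
      by_cases hv : v = B.s
      · rw [if_pos hv] at h
        obtain rfl : u = A.t := by simpa using h
        subst hv
        exact Quot.sound ⟨rfl, rfl⟩
      · rw [if_neg hv] at h; exact absurd h (by simp)
    · simp only [normV] at h
      by_cases hu : u = B.s
      · rw [if_pos hu] at h
        obtain rfl : A.t = v := by simpa using h
        subst hu
        exact (Quot.sound ⟨rfl, rfl⟩).symm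
      · rw [if_neg hu] at h; exact absurd h (by simp)
    · simp only [normV] at h
      by_cases hu : u = B.s <;> by_cases hv : v = B.s
      · subst hu; subst hv; rfl
      · rw [if_pos hu, if_neg hv] at h; exact absurd h (by simp)
      · rw [if_neg hu, if_pos hv] at h; exact absurd h (by simp)
      · rw [if_neg hu, if_neg hv] at h
        rw [show u = v by simpa using h]

lemma mk_inl_eq_inl {u v : A.V} :
    Quot.mk (addRel A B) (.inl u) = Quot.mk (addRel A B) (.inl v) ↔ u = v := by
  rw [mk_eq_iff]; simp [normV]

lemma mk_inr_eq_inr {u v : B.V} :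
    Quot.mk (addRel A B) (.inr u) = Quot.mk (addRel A B) (.inr v) ↔ u = v := by
  rw [mk_eq_iff]
  simp only [normV]
  by_cases hu : u = B.s <;> by_cases hv : v = B.s
  · subst hu; subst hv; simp
  · rw [if_pos hu, if_neg hv]; subst hu; simp [Ne.symm hv]
  · rw [if_neg hu, if_pos hv]; subst hv; simp [hu]
  · rw [if_neg hu, if_neg hv]; simp

lemma mk_inl_eq_inr {u : A.V} {v : B.V} :
    Quot.mk (addRel A B) (.inl u) = Quot.mk (addRel A B) (.inr v) ↔ u = A.t ∧ v = B.s := by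
  rw [mk_eq_iff]
  simp only [normV]
  by_cases hv : v = B.s
  · rw [if_pos hv]; subst hv; simp
  · rw [if_neg hv]; simp [hv]

/-! ### Walks in `A.add B` -/

/-- Map a list of steps in `A` to steps in `A.add B`. -/
def mapA (A B : FlowGraph) (l : List (A.E × Bool)) : List ((A.add B).E × Bool) :=
  l.map fun p => (Sum.inl p.1, p.2)

/-- Map a list of steps in `B` to steps in `A.add B`. -/
def mapB (A B : FlowGraph) (l : List (B.E × Bool)) : List ((A.add B).E × Bool) :=
  l.map fun p => (Sum.inr p.1, p.2)

lemma add_stepSrc_inl (e : A.E) (d : Bool) :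
    (A.add B).stepSrc (Sum.inl e, d) = Quot.mk (addRel A B) (.inl (A.stepSrc (e, d))) := by
  cases d <;> rfl

lemma add_stepTgt_inl (e : A.E) (d : Bool) :
    (A.add B).stepTgt (Sum.inl e, d) = Quot.mk (addRel A B) (.inl (A.stepTgt (e, d))) := by
  cases d <;> rfl

lemma add_stepSrc_inr (e : B.E) (d : Bool) :
    (A.add B).stepSrc (Sum.inr e, d) = Quot.mk (addRel A B) (.inr (B.stepSrc (e, d))) := by
  cases d <;> rfl

lemma add_stepTgt_inr (e : B.E) (d : Bool) :
    (A.add B).stepTgt (Sum.inr e, d) = Quot.mk (addRel A B) (.inr (B.stepTgt (e, d))) := by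
  cases d <;> rfl

lemma isWalk_add_inl {u v : A.V} {l : List (A.E × Bool)} (h : A.IsWalk u v l) :
    (A.add B).IsWalk (Quot.mk (addRel A B) (.inl u)) (Quot.mk (addRel A B) (.inl v))
      (mapA A B l) := by
  induction l generalizing u with
  | nil => obtain rfl : u = v := h; rfl
  | cons p l ih =>
    obtain ⟨h1, h2⟩ := h
    refine ⟨?_, ?_⟩
    · rw [add_stepSrc_inl]
      exact congrArg _ (congrArg _ h1)
    · rw [add_stepTgt_inl]
      exact ih h2

lemma isWalk_add_inr {u v : B.V} {l : List (B.E × Bool)} (h : B.IsWalk u v l) :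
    (A.add B).IsWalk (Quot.mk (addRel A B) (.inr u)) (Quot.mk (addRel A B) (.inr v))
      (mapB A B l) := by
  induction l generalizing u with
  | nil => obtain rfl : u = v := h; rfl
  | cons p l ih =>
    obtain ⟨h1, h2⟩ := h
    refine ⟨?_, ?_⟩
    · rw [add_stepSrc_inr]
      exact congrArg _ (congrArg _ h1)
    · rw [add_stepTgt_inr]
      exact ih h2

lemma walkVertices_add_inl (u : A.V) (l : List (A.E × Bool)) :
    (A.add B).walkVertices (Quot.mk (addRel A B) (.inl u)) (mapA A B l)
      = (A.walkVertices u l).map (fun x => Quot.mk (addRel A B) (.inl x)) := by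
  induction l generalizing u with
  | nil => rfl
  | cons p l ih =>
    show _ :: (A.add B).walkVertices ((A.add B).stepTgt (Sum.inl p.1, p.2)) (mapA A B l) = _
    rw [add_stepTgt_inl, ih]
    rfl

lemma walkVertices_add_inr (u : B.V) (l : List (B.E × Bool)) :
    (A.add B).walkVertices (Quot.mk (addRel A B) (.inr u)) (mapB A B l)
      = (B.walkVertices u l).map (fun x => Quot.mk (addRel A B) (.inr x)) := by
  induction l generalizing u with
  | nil => rfl
  | cons p l ih =>
    show _ :: (A.add B).walkVertices ((A.add B).stepTgt (Sum.inr p.1, p.2)) (mapB A B l) = _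
    rw [add_stepTgt_inr, ih]
    rfl

/-- A walk in `A.add B` that starts on the `B` side and avoids the glue vertex
stays on the `B` side. -/
lemma walk_in_B (l : List ((A.add B).E × Bool)) (w : B.V)
    (hw : (A.add B).IsWalk (Quot.mk (addRel A B) (.inr w)) (Quot.mk (addRel A B) (.inr B.t)) l)
    (hm : Quot.mk (addRel A B) (.inl A.t) ∉
      (A.add B).walkVertices (Quot.mk (addRel A B) (.inr w)) l) :
    ∃ l₂, l = mapB A B l₂ ∧ B.IsWalk w B.t l₂ := by
  induction l generalizing w with
  | nil =>
    have h : _ = _ := hw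
    exact ⟨[], rfl, mk_inr_eq_inr.mp h⟩
  | cons p l ih =>
    have hw' : w ≠ B.s := by
      intro hws
      apply hm
      erw [walkVertices_cons']
      exact List.mem_cons.mpr (Or.inl (by subst hws; exact Quot.sound ⟨rfl, rfl⟩))
    obtain ⟨ed, d⟩ := p
    obtain ⟨h1, h2⟩ := hw
    rcases ed with e | e
    · rw [add_stepSrc_inl] at h1
      obtain ⟨-, hws⟩ := mk_inl_eq_inr.mp h1
      exact absurd hws hw'
    · rw [add_stepSrc_inr] at h1
      have hsrc : B.stepSrc (e, d) = w := mk_inr_eq_inr.mp h1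
      rw [add_stepTgt_inr] at h2
      have hm' : Quot.mk (addRel A B) (.inl A.t) ∉
          (A.add B).walkVertices (Quot.mk (addRel A B) (.inr (B.stepTgt (e, d)))) l := by
        intro hc
        apply hm
        erw [walkVertices_cons', add_stepTgt_inr]
        exact List.mem_cons.mpr (Or.inr hc)
      obtain ⟨l₂, rfl, hwB⟩ := ih (B.stepTgt (e, d)) h2 hm'
      exact ⟨(e, d) :: l₂, rfl, hsrc, hwB⟩

/-- Decomposition of a simple `s`–`t` path in `A.add B`. -/
lemma walk_decompose (l : List ((A.add B).E × Bool)) (u : A.V)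
    (hw : (A.add B).IsWalk (Quot.mk (addRel A B) (.inl u)) (Quot.mk (addRel A B) (.inr B.t)) l)
    (hnd : ((A.add B).walkVertices (Quot.mk (addRel A B) (.inl u)) l).Nodup) :
    ∃ l₁ l₂, l = mapA A B l₁ ++ mapB A B l₂ ∧ A.IsWalk u A.t l₁ ∧ B.IsWalk B.s B.t l₂ := by
  induction l generalizing u with
  | nil =>
    have h : _ = _ := hw
    obtain ⟨hu, hb⟩ := mk_inl_eq_inr.mp h
    exact ⟨[], [], rfl, hu, hb.symm⟩
  | cons p l ih =>
    obtain ⟨ed, d⟩ := p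
    obtain ⟨h1, h2⟩ := hw
    erw [walkVertices_cons'] at hnd
    obtain ⟨hnotmem, hnd'⟩ := List.nodup_cons.mp hnd
    rcases ed with e | e
    · rw [add_stepSrc_inl] at h1
      have hsrc : A.stepSrc (e, d) = u := mk_inl_eq_inl.mp h1
      rw [add_stepTgt_inl] at h2
      have hnd2 : ((A.add B).walkVertices
          (Quot.mk (addRel A B) (.inl (A.stepTgt (e, d)))) l).Nodup := by
        rwa [add_stepTgt_inl] at hnd'
      obtain ⟨l₁, l₂, rfl, hwA, hwB⟩ := ih (A.stepTgt (e, d)) h2 hnd2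
      exact ⟨(e, d) :: l₁, l₂, rfl, ⟨hsrc, hwA⟩, hwB⟩
    · rw [add_stepSrc_inr] at h1
      obtain ⟨hu, hs⟩ := mk_inl_eq_inr.mp h1.symm
      rw [add_stepTgt_inr] at h2
      have hm' : Quot.mk (addRel A B) (.inl A.t) ∉
          (A.add B).walkVertices (Quot.mk (addRel A B) (.inr (B.stepTgt (e, d)))) l := by
        rw [← hu]
        rwa [add_stepTgt_inr] at hnotmem
      obtain ⟨l₂, rfl, hwB⟩ := walk_in_B l (B.stepTgt (e, d)) h2 hm'
      exact ⟨[], (e, d) :: l₂, rfl, hu, hs, hwB⟩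

/-! ### `HasST` in `A.add B` -/

lemma glue_eq : (Quot.mk (addRel A B) (.inl A.t)) = Quot.mk (addRel A B) (.inr B.s) :=
  Quot.sound ⟨rfl, rfl⟩

lemma hasST_add_inl (hA : A.Connected) (hB : B.Connected) (e : A.E) :
    (A.add B).HasST (Sum.inl e) ↔ A.HasST e := by
  constructor
  · rintro ⟨l, hw, hnd, d, hmem⟩
    obtain ⟨l₁, l₂, rfl, hwA, hwB⟩ := walk_decompose l A.s hw hnd
    have hmem' : (e, d) ∈ l₁ := by
      rcases List.mem_append.mp hmem with h | h
      · obtain ⟨p, hp, hpe⟩ := List.mem_map.mp h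
        replace hpe := Prod.mk.inj hpe
        obtain ⟨h3, rfl⟩ := hpe
        obtain rfl := Sum.inl.inj h3
        simpa using hp
      · obtain ⟨p, hp, hpe⟩ := List.mem_map.mp h
        cases hpe
    have hwA' := isWalk_add_inl (B := B) hwA
    replace hnd : ((A.add B).walkVertices (Quot.mk (addRel A B) (.inl A.s))
        (mapA A B l₁ ++ mapB A B l₂)).Nodup := hnd
    rw [walkVertices_append' _ hwA', glue_eq, walkVertices_add_inr] at hnd
    have hsub : List.Sublist
        ((A.add B).walkVertices (Quot.mk (addRel A B) (.inl A.s)) (mapA A B l₁))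
        (((A.add B).walkVertices (Quot.mk (addRel A B) (.inl A.s)) (mapA A B l₁)).dropLast ++
          ((B.walkVertices B.s l₂).map (fun x => Quot.mk (addRel A B) (.inr x))
            : List (A.add B).V)) := by
      conv_lhs => rw [walkVertices_eq_dropLast_append hwA']
      apply List.Sublist.append_left
      erw [List.singleton_sublist, glue_eq]
      exact List.mem_map.mpr ⟨B.s, start_mem_walkVertices _ _, rfl⟩
    have hndA := hnd.sublist hsub
    rw [walkVertices_add_inl] at hndA
    exact ⟨l₁, hwA, hndA.of_map _, d, hmem'⟩
  · rintro ⟨l₁, hwA, hndA, d, hmem⟩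
    obtain ⟨l₂, hwB, hndB⟩ := exists_simple_path hB
    refine ⟨mapA A B l₁ ++ mapB A B l₂, ?_, ?_, d, ?_⟩
    · refine isWalk_append' (isWalk_add_inl hwA) ?_
      rw [glue_eq]
      exact isWalk_add_inr hwB
    · have hwA' := isWalk_add_inl (B := B) hwA
      rw [show (A.add B).s = Quot.mk (addRel A B) (.inl A.s) from rfl,
        walkVertices_append' _ hwA', glue_eq, walkVertices_add_inr, walkVertices_add_inl]
      erw [← List.map_dropLast]
      refine List.Nodup.append ?_ ?_ ?_
      · exact ((hndA.sublist (List.dropLast_sublist _)).map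
          (fun x y hxy => mk_inl_eq_inl.mp hxy))
      · exact hndB.map (fun x y hxy => mk_inr_eq_inr.mp hxy)
      · intro x hx1 hx2
        obtain ⟨a, ha, rfl⟩ := List.mem_map.mp hx1
        obtain ⟨b, hb, hab⟩ := List.mem_map.mp hx2
        obtain ⟨hat, -⟩ := mk_inl_eq_inr.mp hab.symm
        subst hat
        have hvA := walkVertices_eq_dropLast_append hwA
        rw [hvA] at hndA
        exact (List.disjoint_of_nodup_append hndA) ha (by simp)
    · exact List.mem_append.mpr (Or.inl (List.mem_map.mpr ⟨(e, d), hmem, rfl⟩))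

lemma hasST_add_inr (hA : A.Connected) (hB : B.Connected) (e : B.E) :
    (A.add B).HasST (Sum.inr e) ↔ B.HasST e := by
  constructor
  · rintro ⟨l, hw, hnd, d, hmem⟩
    obtain ⟨l₁, l₂, rfl, hwA, hwB⟩ := walk_decompose l A.s hw hnd
    have hmem' : (e, d) ∈ l₂ := by
      rcases List.mem_append.mp hmem with h | h
      · obtain ⟨p, hp, hpe⟩ := List.mem_map.mp h
        cases hpe
      · obtain ⟨p, hp, hpe⟩ := List.mem_map.mp h
        replace hpe := Prod.mk.inj hpe
        obtain ⟨h3, rfl⟩ := hpe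
        obtain rfl := Sum.inr.inj h3
        simpa using hp
    have hwA' := isWalk_add_inl (B := B) hwA
    replace hnd : ((A.add B).walkVertices (Quot.mk (addRel A B) (.inl A.s))
        (mapA A B l₁ ++ mapB A B l₂)).Nodup := hnd
    rw [walkVertices_append' _ hwA', glue_eq, walkVertices_add_inr] at hnd
    have hndB := (hnd.sublist (List.suffix_append _ _).sublist).of_map _
    exact ⟨l₂, hwB, hndB, d, hmem'⟩
  · rintro ⟨l₂, hwB, hndB, d, hmem⟩
    obtain ⟨l₁, hwA, hndA⟩ := exists_simple_path hA
    refine ⟨mapA A B l₁ ++ mapB A B l₂, ?_, ?_, d, ?_⟩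
    · refine isWalk_append' (isWalk_add_inl hwA) ?_
      rw [glue_eq]
      exact isWalk_add_inr hwB
    · have hwA' := isWalk_add_inl (B := B) hwA
      rw [show (A.add B).s = Quot.mk (addRel A B) (.inl A.s) from rfl,
        walkVertices_append' _ hwA', glue_eq, walkVertices_add_inr, walkVertices_add_inl]
      erw [← List.map_dropLast]
      refine List.Nodup.append ?_ ?_ ?_
      · exact ((hndA.sublist (List.dropLast_sublist _)).map
          (fun x y hxy => mk_inl_eq_inl.mp hxy))
      · exact hndB.map (fun x y hxy => mk_inr_eq_inr.mp hxy)
      · intro x hx1 hx2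
        obtain ⟨a, ha, rfl⟩ := List.mem_map.mp hx1
        obtain ⟨b, hb, hab⟩ := List.mem_map.mp hx2
        obtain ⟨hat, -⟩ := mk_inl_eq_inr.mp hab.symm
        subst hat
        have hvA := walkVertices_eq_dropLast_append hwA
        rw [hvA] at hndA
        exact (List.disjoint_of_nodup_append hndA) ha (by simp)
    · exact List.mem_append.mpr (Or.inr (List.mem_map.mpr ⟨(e, d), hmem, rfl⟩))

/-! ### The core vertex set of `A.add B` -/

lemma glue_mem_coreV (hA : A.Connected) (hB : B.Connected) :
    Quot.mk (addRel A B) (.inl A.t) ∈ (A.add B).stCoreV := by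
  obtain ⟨l₁, hw, hnd⟩ := exists_simple_path hA
  rcases List.eq_nil_or_concat l₁ with rfl | ⟨l', p, rfl⟩
  · have hst : A.s = A.t := hw
    exact Or.inl (by rw [← hst]; rfl)
  · rw [List.concat_eq_append] at hw hnd
    have hlast : A.stepTgt p = A.t := isWalk_concat_last hw
    have hst : A.HasST p.1 := ⟨l' ++ [p], hw, hnd, p.2,
      List.mem_append_right _ (List.mem_singleton.mpr rfl)⟩
    refine Or.inr (Or.inr ⟨Sum.inl p.1, (hasST_add_inl hA hB p.1).mpr hst, ?_⟩)
    by_cases hd : p.2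
    · right
      show Quot.mk (addRel A B) (.inl (A.tgt p.1)) = _
      rw [show A.tgt p.1 = A.t by rw [← hlast]; simp [stepTgt, hd]]
    · left
      show Quot.mk (addRel A B) (.inl (A.src p.1)) = _
      rw [show A.src p.1 = A.t by rw [← hlast]; simp [stepTgt, hd]]

lemma coreV_inl (hA : A.Connected) (hB : B.Connected) (v : A.V) :
    Quot.mk (addRel A B) (.inl v) ∈ (A.add B).stCoreV ↔ v ∈ A.stCoreV := by
  constructor
  · rintro (h | h | ⟨ed, hst, hor⟩)
    · exact Or.inl (mk_inl_eq_inl.mp h)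
    · exact Or.inr (Or.inl (mk_inl_eq_inr.mp h).1)
    · rcases ed with e | e
      · refine Or.inr (Or.inr ⟨e, (hasST_add_inl hA hB e).mp hst, ?_⟩)
        rcases hor with h | h
        · exact Or.inl (mk_inl_eq_inl.mp h)
        · exact Or.inr (mk_inl_eq_inl.mp h)
      · rcases hor with h | h
        · exact Or.inr (Or.inl (mk_inl_eq_inr.mp h.symm).1)
        · exact Or.inr (Or.inl (mk_inl_eq_inr.mp h.symm).1)
  · rintro (rfl | rfl | ⟨e, hst, hor⟩)
    · exact Or.inl rfl
    · exact glue_mem_coreV hA hB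
    · refine Or.inr (Or.inr ⟨Sum.inl e, (hasST_add_inl hA hB e).mpr hst, ?_⟩)
      rcases hor with rfl | rfl
      · exact Or.inl rfl
      · exact Or.inr rfl

lemma coreV_inr (hA : A.Connected) (hB : B.Connected) (w : B.V) :
    Quot.mk (addRel A B) (.inr w) ∈ (A.add B).stCoreV ↔ w ∈ B.stCoreV := by
  constructor
  · rintro (h | h | ⟨ed, hst, hor⟩)
    · exact Or.inl (mk_inl_eq_inr.mp h.symm).2
    · exact Or.inr (Or.inl (mk_inr_eq_inr.mp h))
    · rcases ed with e | e
      · rcases hor with h | h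
        · exact Or.inl (mk_inl_eq_inr.mp h).2
        · exact Or.inl (mk_inl_eq_inr.mp h).2
      · refine Or.inr (Or.inr ⟨e, (hasST_add_inr hA hB e).mp hst, ?_⟩)
        rcases hor with h | h
        · exact Or.inl (mk_inr_eq_inr.mp h)
        · exact Or.inr (mk_inr_eq_inr.mp h)
  · rintro (rfl | rfl | ⟨e, hst, hor⟩)
    · exact glue_eq ▸ glue_mem_coreV hA hB
    · exact Or.inr (Or.inl rfl)
    · refine Or.inr (Or.inr ⟨Sum.inr e, (hasST_add_inr hA hB e).mpr hst, ?_⟩)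
      rcases hor with rfl | rfl
      · exact Or.inl rfl
      · exact Or.inr rfl

/-! ### Symmetry of `Iso` -/

lemma Iso.symm' {A B : FlowGraph} (h : A.Iso B) : B.Iso A := by
  obtain ⟨φV, φE, h1, h2, h3, h4⟩ := h
  refine ⟨φV.symm, φE.symm, fun e => ?_, fun e => ?_, ?_, ?_⟩
  · have := h1 (φE.symm e)
    rw [φE.apply_symm_apply] at this
    rw [this, φV.symm_apply_apply]
  · have := h2 (φE.symm e)
    rw [φE.apply_symm_apply] at this
    rw [this, φV.symm_apply_apply]
  · rw [← h3, φV.symm_apply_apply]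
  · rw [← h4, φV.symm_apply_apply]

end FlowGraph

open FlowGraph in
/-- The st-core operation distributes over `⊕`:
st-core (A ⊕ B) ≅ (st-core A) ⊕ (st-core B). -/
theorem flowGraph_stCore_add (A B : FlowGraph)
    (hA : A.Connected) (hB : B.Connected) :
    ((A.add B).stCore).Iso ((A.stCore).add (B.stCore)) := by
  apply Iso.symm'
  -- vertex map
  let gV : A.stCore.V ⊕ B.stCore.V → ((A.add B).stCore).V := fun x =>
    match x with
    | .inl ⟨v, hv⟩ => ⟨Quot.mk (addRel A B) (.inl v), (coreV_inl hA hB v).mpr hv⟩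
    | .inr ⟨w, hw⟩ => ⟨Quot.mk (addRel A B) (.inr w), (coreV_inr hA hB w).mpr hw⟩
  have gV_respects : ∀ x y, addRel A.stCore B.stCore x y → gV x = gV y := by
    rintro x y ⟨rfl, rfl⟩
    exact Subtype.ext (Quot.sound ⟨rfl, rfl⟩)
  let fV : ((A.stCore).add (B.stCore)).V → ((A.add B).stCore).V :=
    Quot.lift gV gV_respects
  have fV_bij : Function.Bijective fV := by
    constructor
    · intro q₁ q₂ h
      induction q₁ using Quot.ind with | _ x =>
      induction q₂ using Quot.ind with | _ y =>
      have h' : (gV x).1 = (gV y).1 := congrArg Subtype.val h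
      rcases x with ⟨v, hv⟩ | ⟨v, hv⟩ <;> rcases y with ⟨w, hw⟩ | ⟨w, hw⟩
      · obtain rfl : v = w := mk_inl_eq_inl.mp h'
        rfl
      · obtain ⟨rfl, rfl⟩ := mk_inl_eq_inr.mp h'
        exact Quot.sound ⟨rfl, rfl⟩
      · obtain ⟨rfl, rfl⟩ := mk_inl_eq_inr.mp h'.symm
        exact (Quot.sound ⟨rfl, rfl⟩).symm
      · obtain rfl : v = w := mk_inr_eq_inr.mp h'
        rfl
    · rintro ⟨q, hq⟩
      induction q using Quot.ind with | _ x =>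
      rcases x with v | w
      · exact ⟨Quot.mk _ (.inl ⟨v, (coreV_inl hA hB v).mp hq⟩), rfl⟩
      · exact ⟨Quot.mk _ (.inr ⟨w, (coreV_inr hA hB w).mp hq⟩), rfl⟩
  -- edge map
  let fE : A.stCore.E ⊕ B.stCore.E → ((A.add B).stCore).E := fun x =>
    match x with
    | .inl ⟨e, he⟩ => ⟨Sum.inl e, (hasST_add_inl hA hB e).mpr he⟩
    | .inr ⟨e, he⟩ => ⟨Sum.inr e, (hasST_add_inr hA hB e).mpr he⟩
  have fE_bij : Function.Bijective fE := by
    constructor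
    · intro x y h
      have h' : (fE x).1 = (fE y).1 := congrArg Subtype.val h
      rcases x with ⟨e, he⟩ | ⟨e, he⟩ <;> rcases y with ⟨f, hf⟩ | ⟨f, hf⟩
      · obtain rfl : e = f := Sum.inl.inj h'
        rfl
      · simp at h'
      · simp at h'
      · obtain rfl : e = f := Sum.inr.inj h'
        rfl
    · rintro ⟨ed, hed⟩
      rcases ed with e | e
      · exact ⟨Sum.inl ⟨e, (hasST_add_inl hA hB e).mp hed⟩, rfl⟩
      · exact ⟨Sum.inr ⟨e, (hasST_add_inr hA hB e).mp hed⟩, rfl⟩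
  refine ⟨Equiv.ofBijective fV fV_bij, Equiv.ofBijective fE fE_bij, ?_, ?_, ?_, ?_⟩
  · rintro (⟨e, he⟩ | ⟨e, he⟩) <;> exact Subtype.ext rfl
  · rintro (⟨e, he⟩ | ⟨e, he⟩) <;> exact Subtype.ext rfl
  · exact Subtype.ext rfl
  · exact Subtype.ext rfl
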